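/- A fold of one crease of the folded paper onto a non-vertex interior point of the paper in an all-layers 1D folding makes the crease pattern unfoldable: in the all-layers model, if a fold at crease P causes some unfolded crease Q to land at a point strictly interior to the remaining paper that is not a crease, then no subsequent sequence of all-layers folds can fold Q. -/
import Mathlib


/-- A mixed 1D crease pattern: paper `[0, L]` with creases
`c 0 < ⋯ < c (n-1)` strictly inside the paper, each assigned mountain
(`some true`), valley (`some false`), or unassigned (`none`). -/
structure MixedPattern where
  L : ℝ
  n : ℕ
  c : Fin n → ℝ
  mono : StrictMono c
  pos : ∀ i, 0 < c i
  lt_len : ∀ i, c i < L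
  asg : Fin n → Option Bool

/-- Two crease labels are compatible when glued by a fold (which flips one of
them): they must not be both mountain nor both valley. -/
def Compatible (x y : Option Bool) : Prop := ∀ b : Bool, ¬ (x = some b ∧ y = some b)

namespace MixedPattern

variable (P : MixedPattern)

/-- Distance from crease `k` to the nearest end of the paper. -/
noncomputable def distToEnd (k : Fin P.n) : ℝ := min (P.c k) (P.L - P.c k)

/-- An all-layers simple fold at crease `k` is *valid* if every other crease
within the overlap region (distance less than `distToEnd k` from `k`) is glued
exactly onto a mirror crease with compatible assignment; creases outside the
overlap land off the paper or on an end. -/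
def ValidFold (k : Fin P.n) : Prop :=
  ∀ i : Fin P.n, i ≠ k → |P.c i - P.c k| < P.distToEnd k →
    ∃ j : Fin P.n, j ≠ k ∧ P.c j = 2 * P.c k - P.c i ∧
      Compatible (P.asg i) (P.asg j)

/-- Crease `k` is *plausible* if, ignoring assignments, the crease positions
are symmetric about `k` within the distance from `k` to the nearest end. -/
def Plausible (k : Fin P.n) : Prop :=
  ∀ i : Fin P.n, |P.c i - P.c k| < P.distToEnd k →
    ∃ j : Fin P.n, P.c j = 2 * P.c k - P.c i

/-- `P'` is the reduced mixed pattern resulting from a valid all-layers fold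
of `P` at crease `k`: the shorter side is reflected onto the longer side and
glued; the remaining creases are those of the longer side (re-coordinatized so
the paper starts at `0`), where a crease receiving a reflected assigned crease
becomes assigned to the flipped label, and all other creases keep their
labels. -/
def IsFoldResult (k : Fin P.n) (P' : MixedPattern) : Prop :=
  ( -- the left side is (nonstrictly) shorter and is reflected to the right
    P.c k ≤ P.L - P.c k ∧
    P'.L = P.L - P.c k ∧
    P'.n + ((k : ℕ) + 1) = P.n ∧
    ∀ j : Fin P'.n, ∃ j' : Fin P.n, (k : ℕ) < (j' : ℕ) ∧
      P'.c j = P.c j' - P.c k ∧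
      (∀ i : Fin P.n, ∀ b : Bool, (i : ℕ) < (k : ℕ) →
        2 * P.c k - P.c i = P.c j' → P.asg i = some b → P'.asg j = some (!b)) ∧
      ((∀ i : Fin P.n, (i : ℕ) < (k : ℕ) → 2 * P.c k - P.c i = P.c j' →
        P.asg i = none) → P'.asg j = P.asg j')) ∨
  ( -- the right side is (nonstrictly) shorter and is reflected to the left
    P.L - P.c k ≤ P.c k ∧
    P'.L = P.c k ∧
    P'.n = (k : ℕ) ∧
    ∀ j : Fin P'.n, ∃ j' : Fin P.n, (j' : ℕ) < (k : ℕ) ∧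
      P'.c j = P.c j' ∧
      (∀ i : Fin P.n, ∀ b : Bool, (k : ℕ) < (i : ℕ) →
        2 * P.c k - P.c i = P.c j' → P.asg i = some b → P'.asg j = some (!b)) ∧
      ((∀ i : Fin P.n, (k : ℕ) < (i : ℕ) → 2 * P.c k - P.c i = P.c j' →
        P.asg i = none) → P'.asg j = P.asg j'))

end MixedPattern

/-- A mixed 1D crease pattern can be completely folded by a sequence of valid
all-layers simple folds. -/
inductive CompletelyFoldable : MixedPattern → Prop
  | nil (P : MixedPattern) (h : P.n = 0) : CompletelyFoldable P
  | fold (P : MixedPattern) (k : Fin P.n) (P' : MixedPattern)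
      (hv : P.ValidFold k) (hr : P.IsFoldResult k P')
      (h' : CompletelyFoldable P') : CompletelyFoldable P

namespace MixedPattern

/-- `(P', g')` is the state resulting from an all-layers fold of the state
`(P, g)` at crease `k` (where `g` marks the creases that are already glued
flat, i.e., stuck to flat paper and hence never foldable).  The shorter side
is reflected onto the longer side and glued; the creases of the new pattern
are the kept creases of the longer side together with the landing positions of
the reflected creases (matching pairs merge).  A new crease is glued iff it
comes from a glued crease, or it lies in the glued overlap region without
being matched by a partner crease (it is glued to flat paper). -/
def GFoldResult (P : MixedPattern) (g : Fin P.n → Bool) (k : Fin P.n)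
    (P' : MixedPattern) (g' : Fin P'.n → Bool) : Prop :=
  g k = false ∧
  (( -- the left side is (nonstrictly) shorter and is reflected to the right
    P.c k ≤ P.L - P.c k ∧
    P'.L = P.L - P.c k ∧
    (∀ j' : Fin P.n, (k : ℕ) < (j' : ℕ) →
      ∃ j : Fin P'.n, P'.c j = P.c j' - P.c k) ∧
    (∀ i : Fin P.n, (i : ℕ) < (k : ℕ) →
      ∃ j : Fin P'.n, P'.c j = P.c k - P.c i) ∧
    (∀ j : Fin P'.n,
      (∃ j' : Fin P.n, (k : ℕ) < (j' : ℕ) ∧ P'.c j = P.c j' - P.c k) ∨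
      (∃ i : Fin P.n, (i : ℕ) < (k : ℕ) ∧ P'.c j = P.c k - P.c i)) ∧
    (∀ j : Fin P'.n, g' j = true ↔
      (∃ j' : Fin P.n, (k : ℕ) < (j' : ℕ) ∧ P'.c j = P.c j' - P.c k ∧
        (g j' = true ∨ (P'.c j < P.c k ∧
          ∀ i : Fin P.n, (i : ℕ) < (k : ℕ) → P.c k - P.c i ≠ P'.c j))) ∨
      (∃ i : Fin P.n, (i : ℕ) < (k : ℕ) ∧ P'.c j = P.c k - P.c i ∧
        (g i = true ∨
          ∀ j' : Fin P.n, (k : ℕ) < (j' : ℕ) → P.c j' - P.c k ≠ P'.c j)))) ∨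
  ( -- the right side is (nonstrictly) shorter and is reflected to the left
    P.L - P.c k ≤ P.c k ∧
    P'.L = P.c k ∧
    (∀ j' : Fin P.n, (j' : ℕ) < (k : ℕ) →
      ∃ j : Fin P'.n, P'.c j = P.c j') ∧
    (∀ i : Fin P.n, (k : ℕ) < (i : ℕ) → 0 < 2 * P.c k - P.c i →
      ∃ j : Fin P'.n, P'.c j = 2 * P.c k - P.c i) ∧
    (∀ j : Fin P'.n,
      (∃ j' : Fin P.n, (j' : ℕ) < (k : ℕ) ∧ P'.c j = P.c j') ∨
      (∃ i : Fin P.n, (k : ℕ) < (i : ℕ) ∧ P'.c j = 2 * P.c k - P.c i)) ∧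
    (∀ j : Fin P'.n, g' j = true ↔
      (∃ j' : Fin P.n, (j' : ℕ) < (k : ℕ) ∧ P'.c j = P.c j' ∧
        (g j' = true ∨ (2 * P.c k - P.L < P'.c j ∧
          ∀ i : Fin P.n, (k : ℕ) < (i : ℕ) → 2 * P.c k - P.c i ≠ P'.c j))) ∨
      (∃ i : Fin P.n, (k : ℕ) < (i : ℕ) ∧ P'.c j = 2 * P.c k - P.c i ∧
        (g i = true ∨
          ∀ j' : Fin P.n, (j' : ℕ) < (k : ℕ) → P.c j' ≠ P'.c j)))))

end MixedPattern

/-- A state `(P, g)` (mixed pattern with glued-crease marks) can be completely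
folded by valid all-layers simple folds; glued creases can never be folded. -/
inductive GCompletelyFoldable : (P : MixedPattern) → (Fin P.n → Bool) → Prop
  | nil (P : MixedPattern) (g : Fin P.n → Bool) (h : P.n = 0) :
      GCompletelyFoldable P g
  | fold (P : MixedPattern) (g : Fin P.n → Bool) (k : Fin P.n)
      (P' : MixedPattern) (g' : Fin P'.n → Bool)
      (hv : P.ValidFold k) (hr : P.GFoldResult g k P' g')
      (h' : GCompletelyFoldable P' g') : GCompletelyFoldable P g

/-- In the all-layers model (where layers, once in contact,
are glued), a fold that lands a crease on a non-vertex interior point of the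
paper makes the pattern unfoldable: if the all-layers fold of the pristine
pattern `P` at crease `k` sends some other crease `q` (in the overlap region)
to a point strictly interior to the remaining paper that is not a crease, then
A glued crease persists through any sequence of folds, so a state with a
glued crease is never completely foldable. -/
theorem glued_not_foldable {P : MixedPattern} {g : Fin P.n → Bool}
    (h : GCompletelyFoldable P g) : ∀ j : Fin P.n, g j ≠ true := by
  induction h with
  | nil P g h =>
    intro j
    exact absurd j.2 (by simp [h])
  | fold P g k P' g' hv hr h' ih =>
    intro j hj
    obtain ⟨hgk, hcase⟩ := hr
    rcases hcase with ⟨hle, hL, hkeep, hrefl, hcover, hglue⟩ |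
        ⟨hle, hL, hkeep, hrefl, hcover, hglue⟩
    · rcases Nat.lt_trichotomy (j : ℕ) (k : ℕ) with hlt | heq | hgt
      · obtain ⟨j2, hj2⟩ := hrefl j hlt
        exact ih j2 ((hglue j2).mpr (Or.inr ⟨j, hlt, hj2, Or.inl hj⟩))
      · exact absurd hgk (by rw [show k = j from Fin.ext heq.symm, hj]; simp)
      · obtain ⟨j2, hj2⟩ := hkeep j hgt
        exact ih j2 ((hglue j2).mpr (Or.inl ⟨j, hgt, hj2, Or.inl hj⟩))
    · rcases Nat.lt_trichotomy (j : ℕ) (k : ℕ) with hlt | heq | hgt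
      · obtain ⟨j2, hj2⟩ := hkeep j hlt
        exact ih j2 ((hglue j2).mpr (Or.inl ⟨j, hlt, hj2, Or.inl hj⟩))
      · exact absurd hgk (by rw [show k = j from Fin.ext heq.symm, hj]; simp)
      · obtain ⟨j2, hj2⟩ := hrefl j hgt (by have := P.lt_len j; linarith)
        exact ih j2 ((hglue j2).mpr (Or.inr ⟨j, hgt, hj2, Or.inl hj⟩))

/-- In the all-layers model (where layers, once in contact,
are glued), a fold that lands a crease on a non-vertex interior point of the
paper makes the pattern unfoldable: if the all-layers fold of the pristine
pattern `P` at crease `k` sends some other crease `q` (in the overlap region)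
to a point strictly interior to the remaining paper that is not a crease, then
no subsequent sequence of all-layers folds can fold `q` — the resulting state
admits no complete folding. -/
theorem fold_onto_flat_point_unfoldable (P : MixedPattern) (k q : Fin P.n)
    (hq : q ≠ k)
    (hoverlap : |P.c q - P.c k| < P.distToEnd k)
    (hnoncrease : ∀ j : Fin P.n, P.c j ≠ 2 * P.c k - P.c q)
    (P' : MixedPattern) (g' : Fin P'.n → Bool)
    (hr : P.GFoldResult (fun _ => false) k P' g') :
    ¬ GCompletelyFoldable P' g' := by
  intro h
  obtain ⟨hgk, hcase⟩ := hr
  have hd1 : P.distToEnd k ≤ P.c k := min_le_left _ _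
  have hd2 : P.distToEnd k ≤ P.L - P.c k := min_le_right _ _
  have hqk : (q : ℕ) ≠ (k : ℕ) := fun h => hq (Fin.ext h)
  rcases hcase with ⟨hle, hL, hkeep, hrefl, hcover, hglue⟩ |
      ⟨hle, hL, hkeep, hrefl, hcover, hglue⟩
  · rcases Nat.lt_trichotomy (q : ℕ) (k : ℕ) with hlt | heq | hgt
    · obtain ⟨j, hj⟩ := hrefl q hlt
      refine glued_not_foldable h j ((hglue j).mpr (Or.inr ⟨q, hlt, hj, Or.inr ?_⟩))
      intro j' _ hc
      exact hnoncrease j' (by rw [hj] at hc; linarith)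
    · exact absurd heq hqk
    · obtain ⟨j, hj⟩ := hkeep q hgt
      have hcq : P.c k < P.c q := P.mono (show k < q from hgt)
      have habs : |P.c q - P.c k| = P.c q - P.c k := abs_of_pos (by linarith)
      refine glued_not_foldable h j ((hglue j).mpr (Or.inl ⟨q, hgt, hj, Or.inr
        ⟨by rw [hj]; rw [habs] at hoverlap; linarith, ?_⟩⟩))
      intro i _ hc
      exact hnoncrease i (by rw [hj] at hc; linarith)
  · rcases Nat.lt_trichotomy (q : ℕ) (k : ℕ) with hlt | heq | hgt
    · obtain ⟨j, hj⟩ := hkeep q hlt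
      have hcq : P.c q < P.c k := P.mono (show q < k from hlt)
      have habs' : P.c k - P.c q < P.distToEnd k := by
        rwa [abs_sub_comm, abs_of_pos (by linarith : (0:ℝ) < P.c k - P.c q)] at hoverlap
      refine glued_not_foldable h j ((hglue j).mpr (Or.inl ⟨q, hlt, hj, Or.inr
        ⟨by rw [hj]; linarith, ?_⟩⟩))
      intro i _ hc
      exact hnoncrease i (by rw [hj] at hc; linarith)
    · exact absurd heq hqk
    · have hcq : P.c k < P.c q := P.mono (show k < q from hgt)
      have habs' : P.c q - P.c k < P.distToEnd k := by
        rwa [abs_of_pos (by linarith : (0:ℝ) < P.c q - P.c k)] at hoverlap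
      obtain ⟨j, hj⟩ := hrefl q hgt (by linarith)
      refine glued_not_foldable h j ((hglue j).mpr (Or.inr ⟨q, hgt, hj, Or.inr ?_⟩))
      intro j' _ hc
      exact hnoncrease j' (by rw [hj] at hc; linarith)
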